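/- Let n ≥ 1 and let f ∈ QC₀(ℝⁿ) be regular. Then the map V_ف : [0,1] → [0,∞] defined by V_f(t) = vol({x : f(x) ≥ t}) is strictly decreasing, continuous (with respect to the order topology on [0,∞]), and a bijection from [0,1] onto [0,∞]; in particular V_f(0) = ∞, V_f(1) = 0, and 0 < V_f(t) < ∞ for every t ∈ (0,1). -/

import Mathlib

open MeasureTheory ENNReal Filter Topology Set

noncomputable section

abbrev En (n : ℕ) := EuclideanSpace ℝ (Fin n)

def QuasiConcave {n : ℕ} (f : En n → ℝ≥0∞) : Prop :=
  ∀ x y : En n, ∀ l : ℝ, 0 < l → l < 1 →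
    min (f x) (f y) ≤ f (l • x + (1 - l) • y)

def QC {n : ℕ} (f : En n → ℝ≥0∞) : Prop :=
  UpperSemicontinuous f ∧ QuasiConcave f ∧ ∀ x, f x ≠ ∞

def QC0 {n : ℕ} (f : En n → ℝ≥0∞) : Prop :=
  QC f ∧ f 0 = 1 ∧ ∀ x, f x ≤ 1

/-- `f` is regular: continuous, strictly radially decreasing away from the origin, and
vanishing at infinity. -/
def RegularQC {n : ℕ} (f : En n → ℝ≥0∞) : Prop :=
  Continuous f ∧
  (∀ x : En n, x ≠ 0 → ∀ l : ℝ, 0 < l → l < 1 → f x < f (l • x)) ∧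
  Filter.Tendsto f (Filter.cocompact (En n)) (𝓝 0)

theorem stmt14 (n : ℕ) (hn : 1 ≤ n) (f : En n → ℝ≥0∞)
    (hf : QC0 f) (hreg : RegularQC f) :
    StrictAntiOn (fun t : ℝ≥0∞ => volume {x : En n | t ≤ f x}) (Set.Icc 0 1) ∧
    ContinuousOn (fun t : ℝ≥0∞ => volume {x : En n | t ≤ f x}) (Set.Icc 0 1) ∧
    Set.BijOn (fun t : ℝ≥0∞ => volume {x : En n | t ≤ f x}) (Set.Icc 0 1) Set.univ ∧
    volume {x : En n | (0 : ℝ≥0∞) ≤ f x} = ∞ ∧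
    volume {x : En n | (1 : ℝ≥0∞) ≤ f x} = 0 ∧
    ∀ t : ℝ≥0∞, 0 < t → t < 1 →
      0 < volume {x : En n | t ≤ f x} ∧ volume {x : En n | t ≤ f x} < ∞ := by
  obtain ⟨⟨husc, hqc, hfin⟩, hf0, hle1⟩ := hf
  obtain ⟨hc, hrad, hcoc⟩ := hreg
  haveI : Nonempty (Fin n) := ⟨⟨0, hn⟩⟩
  set i0 : Fin n := ⟨0, hn⟩
  haveI hnontriv : Nontrivial (En n) := by
    refine ⟨EuclideanSpace.single i0 (1 : ℝ), 0, fun h => ?_⟩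
    have := congrArg (fun v : En n => v i0) h
    simp [EuclideanSpace.single_apply] at this
  set V : ℝ≥0∞ → ℝ≥0∞ := fun t => volume {x : En n | t ≤ f x} with hV
  have hclosed : ∀ t : ℝ≥0∞, IsClosed {x : En n | t ≤ f x} := fun t =>
    isClosed_le continuous_const hc
  have hanti : Antitone V := fun a b hab =>
    measure_mono (fun x hx => le_trans hab hx)
  -- positivity of f
  have hpos : ∀ x : En n, 0 < f x := by
    intro x
    rcases eq_or_lt_of_le (zero_le : (0:ℝ≥0∞) ≤ f x) with hx0 | hx0
    · exfalso
      have hxne : x ≠ 0 := by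
        rintro rfl
        rw [hf0] at hx0
        simp at hx0
      have h2 : ((2:ℝ) • x) ≠ 0 := smul_ne_zero two_ne_zero hxne
      have h := hrad ((2:ℝ) • x) h2 (1/2) (by norm_num) (by norm_num)
      rw [smul_smul] at h
      norm_num at h
      rw [← hx0] at h
      exact (not_lt_bot h)
    · exact hx0
  -- superlevel set at 1 is {0}
  have hK1 : {x : En n | 1 ≤ f x} = {0} := by
    ext x
    simp only [mem_setOf_eq, mem_singleton_iff]
    constructor
    · intro hx
      by_contra hxne
      have h1 : f x = 1 := le_antisymm (hle1 x) hx
      have h := hrad x hxne (1/2) (by norm_num) (by norm_num)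
      rw [h1] at h
      exact absurd (hle1 _) (not_le.2 h)
    · rintro rfl; rw [hf0]
  have hV1 : volume {x : En n | 1 ≤ f x} = 0 := by
    rw [hK1]; exact measure_singleton 0
  -- compactness and finiteness
  have hcomp : ∀ t : ℝ≥0∞, 0 < t → IsCompact {x : En n | t ≤ f x} := by
    intro t ht
    have hm : {x : En n | f x < t} ∈ cocompact (En n) := hcoc (Iio_mem_nhds ht)
    rcases mem_cocompact.1 hm with ⟨K, hK, hKc⟩
    refine hK.of_isClosed_subset (hclosed t) (fun x hx => ?_)
    have hx' : t ≤ f x := hx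
    by_contra hxK
    exact absurd hx' (not_le.2 (hKc hxK))
  have hVfin : ∀ t : ℝ≥0∞, 0 < t → V t < ∞ := fun t ht => (hcomp t ht).measure_lt_top
  -- V 0 = ∞
  have hV0set : {x : En n | (0:ℝ≥0∞) ≤ f x} = univ := eq_univ_of_forall (fun x => show (0:ℝ≥0∞) ≤ f x from zero_le)
  have hV0 : volume {x : En n | (0:ℝ≥0∞) ≤ f x} = ∞ := by
    rw [hV0set]
    exact measure_univ_of_isAddLeftInvariant volume
  -- convexity of superlevel sets
  have hconv : ∀ t : ℝ≥0∞, Convex ℝ {x : En n | t ≤ f x} := by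
    intro t x hx y hy a b ha hb hab
    rcases eq_or_lt_of_le ha with ha0 | ha0
    · have hb1 : b = 1 := by linarith
      simp only [← ha0, hb1, zero_smul, zero_add, one_smul]
      exact hy
    rcases eq_or_lt_of_le hb with hb0 | hb0
    · have ha1 : a = 1 := by linarith
      simp only [← hb0, ha1, zero_smul, add_zero, one_smul]
      exact hx
    · have ha1 : a < 1 := by linarith
      have hb' : b = 1 - a := by linarith
      rw [hb']
      exact le_trans (le_min hx hy) (hqc x y a ha0 ha1)
  -- null level sets
  have hnull : ∀ t : ℝ≥0∞, 0 < t → t ≤ 1 → volume {x : En n | f x = t} = 0 := by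
    intro t ht0 ht1
    rcases eq_or_lt_of_le ht1 with ht1' | ht1'
    · refine measure_mono_null (fun x hx => ?_) hV1
      rw [mem_setOf_eq] at hx ⊢
      rw [hx, ht1']
    · have hsub : {x : En n | f x = t} ⊆ frontier {x : En n | t ≤ f x} := by
        intro x hx
        rw [mem_setOf_eq] at hx
        rw [frontier, mem_diff]
        constructor
        · rw [(hclosed t).closure_eq]
          exact le_of_eq hx.symm
        · intro hint
          have hxne : x ≠ 0 := by
            rintro rfl
            rw [hf0] at hx
            exact absurd hx.symm (ne_of_lt ht1')
          have hcont : ContinuousAt (fun r : ℝ => r • x) 1 :=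
            (continuous_id.smul continuous_const).continuousAt
          have hmem : (fun r : ℝ => r • x) ⁻¹' (interior {x : En n | t ≤ f x}) ∈ 𝓝 (1:ℝ) := by
            apply hcont.preimage_mem_nhds
            rw [one_smul]
            exact isOpen_interior.mem_nhds hint
          obtain ⟨ε, hε, hball⟩ := Metric.mem_nhds_iff.1 hmem
          set r : ℝ := 1 + ε/2 with hrdef
          have hr1 : 1 < r := by simp [hrdef]; linarith
          have hrball : r ∈ Metric.ball (1:ℝ) ε := by
            rw [Metric.mem_ball, Real.dist_eq, hrdef,
              show (1 + ε/2 - 1 : ℝ) = ε/2 by ring, abs_of_pos (half_pos hε)]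
            linarith
          have hrmem : r • x ∈ {x : En n | t ≤ f x} := interior_subset (hball hrball)
          have hrne : r • x ≠ 0 := smul_ne_zero (by linarith) hxne
          have h := hrad (r • x) hrne r⁻¹ (by positivity) (inv_lt_one_of_one_lt₀ hr1)
          rw [smul_smul, inv_mul_cancel₀ (by linarith), one_smul, hx] at h
          exact absurd hrmem (not_le.2 h)
      exact measure_mono_null hsub ((hconv t).addHaar_frontier volume)
  -- existence of points with any intermediate value
  have hray : ∀ c : ℝ≥0∞, 0 < c → c < 1 → ∃ x : En n, f x = c := by
    intro c hc0 hc1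
    set e : En n := EuclideanSpace.single i0 (1:ℝ) with he
    have henorm : ‖e‖ = 1 := by rw [he, EuclideanSpace.norm_single]; norm_num
    have hnorm_eq : (fun r : ℝ => ‖r • e‖) = fun r : ℝ => |r| := by
      funext r
      rw [norm_smul, henorm, mul_one, Real.norm_eq_abs]
    have htend : Tendsto (fun r : ℝ => r • e) atTop (cocompact (En n)) := by
      rw [← Metric.cobounded_eq_cocompact, ← tendsto_norm_atTop_iff_cobounded]
      rw [hnorm_eq]
      exact tendsto_abs_atTop_atTop
    have hg : Tendsto (fun r : ℝ => f (r • e)) atTop (𝓝 0) := hcoc.comp htend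
    obtain ⟨R, hRc, hR0⟩ :=
      ((hg.eventually (Iio_mem_nhds hc0)).and (eventually_ge_atTop (0:ℝ))).exists
    have h0 : f ((0:ℝ) • e) = 1 := by rw [zero_smul, hf0]
    have hecont : Continuous (fun r : ℝ => f (r • e)) :=
      hc.comp (continuous_id.smul continuous_const)
    have hIVT := intermediate_value_Icc' hR0 hecont.continuousOn
    obtain ⟨r, _, hr⟩ := hIVT ⟨le_of_lt hRc, by rw [h0]; exact le_of_lt hc1⟩
    exact ⟨r • e, hr⟩
  -- strict antitonicity
  have hstrict : StrictAntiOn V (Icc 0 1) := by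
    intro s hs t ht hst
    rcases eq_or_lt_of_le hs.1 with hs0 | hs0
    · have hts : 0 < t := by rw [hs0]; exact hst
      calc V t < ∞ := hVfin t hts
        _ = V s := by rw [hV, ← hs0]; exact hV0.symm
    · obtain ⟨c, hsc, hct⟩ := exists_between hst
      have hc1 : c < 1 := lt_of_lt_of_le hct ht.2
      obtain ⟨x₀, hx₀⟩ := hray c (lt_trans hs0 hsc) hc1
      set U : Set (En n) := f ⁻¹' (Ioo s t) with hU
      have hUopen : IsOpen U := isOpen_Ioo.preimage hc
      have hUne : U.Nonempty := ⟨x₀, by simp only [hU, mem_preimage, hx₀]; exact ⟨hsc, hct⟩⟩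
      have hUpos : 0 < volume U := hUopen.measure_pos volume hUne
      have hdisj : Disjoint {x : En n | t ≤ f x} U := by
        rw [Set.disjoint_right]
        intro x hxU hxK
        exact absurd hxK (not_le.2 hxU.2)
      have hsub : {x : En n | t ≤ f x} ∪ U ⊆ {x : En n | s ≤ f x} := by
        rintro x (hx | hx)
        · exact le_trans (le_of_lt hst) hx
        · exact le_of_lt hx.1
      calc V t < V t + volume U :=
            ENNReal.lt_add_right (hVfin t (lt_trans hs0 hst)).ne (ne_of_gt hUpos)
        _ = volume ({x : En n | t ≤ f x} ∪ U) :=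
            (measure_union hdisj hUopen.measurableSet).symm
        _ ≤ V s := measure_mono hsub
  -- left continuity
  have hleft : ∀ t : ℝ≥0∞, 0 ≤ t → Tendsto V (𝓝[<] t) (𝓝 (V t)) := by
    intro t _
    rcases eq_or_lt_of_le (zero_le : (0:ℝ≥0∞) ≤ t) with ht0 | ht0
    · have h1 : Iio t = (∅ : Set ℝ≥0∞) := by
        ext x; simp [← ht0]
      rw [h1, nhdsWithin_empty]
      exact tendsto_bot
    · have hlim := hanti.tendsto_nhdsLT t
      suffices h : sInf (V '' Iio t) = V t by rwa [h] at hlim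
      refine le_antisymm ?_ (le_sInf ?_)
      · obtain ⟨u, hu_mono, hu_mem, hu_tend⟩ := exists_seq_strictMono_tendsto' ht0
        have hsup : iSup u = t :=
          tendsto_nhds_unique (tendsto_atTop_iSup hu_mono.monotone) hu_tend
        have hiInter : ⋂ m, {x : En n | u m ≤ f x} = {x : En n | t ≤ f x} := by
          ext x
          simp only [mem_iInter, mem_setOf_eq]
          constructor
          · intro h
            rw [← hsup]
            exact iSup_le h
          · intro h m
            exact le_trans (le_of_lt (hu_mem m).2) h
        have hAnti : Antitone (fun m => {x : En n | u m ≤ f x}) := fun a b hab x hx =>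
          le_trans (hu_mono.monotone hab) hx
        have hEq := hAnti.measure_iInter (μ := volume)
          (fun m => (hclosed _).measurableSet.nullMeasurableSet)
          ⟨0, (hVfin _ (hu_mem 0).1).ne⟩
        rw [hiInter] at hEq
        calc sInf (V '' Iio t) ≤ ⨅ m, V (u m) :=
              le_iInf (fun m => sInf_le ⟨u m, (hu_mem m).2, rfl⟩)
          _ = V t := hEq.symm
      · rintro b ⟨s, hsmem, rfl⟩
        exact hanti (le_of_lt hsmem)
  -- right continuity
  have hright : ∀ t : ℝ≥0∞, t ≤ 1 → Tendsto V (𝓝[>] t) (𝓝 (V t)) := by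
    intro t ht1
    have hlim := hanti.tendsto_nhdsGT t
    suffices h : sSup (V '' Ioi t) = V t by rwa [h] at hlim
    refine le_antisymm (sSup_le ?_) ?_
    · rintro b ⟨s, hsmem, rfl⟩
      exact hanti (le_of_lt hsmem)
    · obtain ⟨u, hu_anti, hu_mem, hu_tend⟩ :=
        exists_seq_strictAnti_tendsto' (lt_of_le_of_lt ht1 (by norm_num : (1:ℝ≥0∞) < 2))
      have hMono : Monotone (fun m => {x : En n | u m ≤ f x}) := fun a b hab x hx =>
        le_trans (hu_anti.antitone hab) hx
      have hUnion : ⋃ m, {x : En n | u m ≤ f x} = {x : En n | t < f x} := by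
        ext x
        simp only [mem_iUnion, mem_setOf_eq]
        constructor
        · rintro ⟨m, h⟩
          exact lt_of_lt_of_le (hu_mem m).1 h
        · intro h
          obtain ⟨m, hm⟩ := (hu_tend.eventually (Iio_mem_nhds h)).exists
          exact ⟨m, le_of_lt hm⟩
      have hEq : volume {x : En n | t < f x} = ⨆ m, V (u m) := by
        rw [← hUnion]
        exact hMono.measure_iUnion
      have hVle : V t ≤ volume {x : En n | t < f x} := by
        rcases eq_or_lt_of_le (zero_le : (0:ℝ≥0∞) ≤ t) with ht0 | ht0
        · have : {x : En n | t < f x} = univ := eq_univ_of_forall (fun x => by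
            rw [mem_setOf_eq, ← ht0]; exact hpos x)
          rw [this]
          exact measure_mono (subset_univ _)
        · calc V t ≤ volume ({x : En n | t < f x} ∪ {x : En n | f x = t}) := by
                refine measure_mono (fun x hx => ?_)
                have hx' : t ≤ f x := hx
                simp only [mem_union, mem_setOf_eq]
                rcases eq_or_lt_of_le hx' with h | h
                · exact Or.inr h.symm
                · exact Or.inl h
            _ ≤ volume {x : En n | t < f x} + volume {x : En n | f x = t} :=
                measure_union_le _ _
            _ = volume {x : En n | t < f x} := by rw [hnull t ht0 ht1, add_zero]
      calc V t ≤ volume {x : En n | t < f x} := hVle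
        _ = ⨆ m, V (u m) := hEq
        _ ≤ sSup (V '' Ioi t) := iSup_le (fun m => le_sSup ⟨u m, (hu_mem m).1, rfl⟩)
  -- continuity
  have hcont : ContinuousOn V (Icc 0 1) := by
    intro t ht
    have h1 : Tendsto V (𝓝[≥] t) (𝓝 (V t)) := by
      rw [show Ici t = insert t (Ioi t) from Set.Ioi_insert.symm, nhdsWithin_insert]
      exact tendsto_sup.2 ⟨by simpa using tendsto_pure_nhds V t, hright t ht.2⟩
    have hat : ContinuousAt V t := by
      rw [ContinuousAt, ← nhdsLT_sup_nhdsGE t]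
      exact tendsto_sup.2 ⟨hleft t ht.1, h1⟩
    exact hat.continuousWithinAt
  -- surjectivity
  have hsurj : SurjOn V (Icc 0 1) univ := by
    intro y _
    have hIVT := intermediate_value_Icc' (zero_le_one (α := ℝ≥0∞)) hcont
    apply hIVT
    constructor
    · show V 1 ≤ y
      rw [hV]
      simp only [hV1]
      exact zero_le
    · show y ≤ V 0
      rw [hV]
      simp only [hV0]
      exact le_top
  refine ⟨hstrict, hcont, ⟨fun x _ => mem_univ _, hstrict.injOn, hsurj⟩, hV0, hV1,
    fun t ht0 ht1 => ⟨?_, hVfin t ht0⟩⟩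
  have hopen : IsOpen {x : En n | t < f x} := by
    have : {x : En n | t < f x} = f ⁻¹' (Ioi t) := rfl
    rw [this]
    exact isOpen_Ioi.preimage hc
  have hne : {x : En n | t < f x}.Nonempty := ⟨0, by rw [mem_setOf_eq, hf0]; exact ht1⟩
  calc (0:ℝ≥0∞) < volume {x : En n | t < f x} := hopen.measure_pos volume hne
    _ ≤ volume {x : En n | t ≤ f x} := measure_mono (fun x hx => show t ≤ f x from le_of_lt hx)
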